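/- arXiv:1806.06400 — 3 statements merged into one kernel-verified Lean document; each statement's English description precedes it below -/
import Mathlib

section
/- For κ ∈ (0, 1/2), the integral ∫₀^∞ (|s−1|^κ · 1_{s>1} − s^κ)² ds is finite and strictly positive. -/
open MeasureTheory

theorem cusp_Rminus_finite_pos (κ : ℝ) (hκ0 : 0 < κ) (hκ : κ < 1/2) :
    IntegrableOn
      (fun s : ℝ => ((if 1 < s then |s - 1| ^ κ else 0) - s ^ κ) ^ 2) (Set.Ioi 0) ∧
    0 < ∫ s in Set.Ioi (0:ℝ), ((if 1 < s then |s - 1| ^ κ else 0) - s ^ κ) ^ 2 := by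
  set f : ℝ → ℝ := fun s => ((if 1 < s then |s - 1| ^ κ else 0) - s ^ κ) ^ 2 with hf
  have hmeas : Measurable f := by
    apply Measurable.pow_const
    apply Measurable.sub
    · exact Measurable.ite (measurableSet_lt measurable_const measurable_id)
        (((Real.continuous_rpow_const hκ0.le).comp
          (continuous_abs.comp (continuous_id.sub continuous_const))).measurable)
        measurable_const
    · exact ((Real.continuous_rpow_const hκ0.le).comp continuous_id).measurable
  have hnonneg : ∀ s, 0 ≤ f s := fun s => sq_nonneg _
  -- integrability on (0, 2]
  have h1 : IntegrableOn f (Set.Ioc 0 2) := by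
    apply Measure.integrableOn_of_bounded (M := 4)
    · simp [Real.volume_Ioc]
    · exact hmeas.aestronglyMeasurable
    · filter_upwards [ae_restrict_mem measurableSet_Ioc] with s hs
      obtain ⟨hs0, hs2⟩ := hs
      rw [Real.norm_eq_abs, abs_of_nonneg (hnonneg s)]
      have hsk : s ^ κ ≤ 2 ^ κ := Real.rpow_le_rpow hs0.le hs2 hκ0.le
      have h2k : (2:ℝ) ^ κ ≤ 2 := by
        calc (2:ℝ) ^ κ ≤ 2 ^ (1:ℝ) := Real.rpow_le_rpow_of_exponent_le one_le_two (by linarith)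
        _ = 2 := Real.rpow_one 2
      have hsk0 : 0 ≤ s ^ κ := Real.rpow_nonneg hs0.le κ
      have habs : |(if 1 < s then |s - 1| ^ κ else 0) - s ^ κ| ≤ 2 := by
        by_cases h : 1 < s
        · simp only [if_pos h]
          have h1 : |s - 1| ^ κ ≤ s ^ κ := by
            rw [abs_of_nonneg (by linarith)]
            exact Real.rpow_le_rpow (by linarith) (by linarith) hκ0.le
          have h2 : 0 ≤ |s - 1| ^ κ := Real.rpow_nonneg (abs_nonneg _) κ
          rw [abs_sub_comm, abs_of_nonneg (by linarith)]
          linarith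
        · simp only [if_neg h]
          rw [zero_sub, abs_neg, abs_of_nonneg hsk0]
          linarith
      calc ((if 1 < s then |s - 1| ^ κ else 0) - s ^ κ) ^ 2
          = |(if 1 < s then |s - 1| ^ κ else 0) - s ^ κ| ^ 2 := (sq_abs _).symm
        _ ≤ 2 ^ 2 := by
            apply pow_le_pow_left₀ (abs_nonneg _) habs
        _ = 4 := by norm_num
  -- integrability on (2, ∞)
  have h2 : IntegrableOn f (Set.Ioi 2) := by
    have hg : IntegrableOn (fun s : ℝ => (κ * 2 ^ ((1:ℝ) - κ)) ^ 2 * s ^ ((κ - 1) * (2:ℕ)))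
        (Set.Ioi 2) := by
      apply Integrable.const_mul
      apply integrableOn_Ioi_rpow_of_lt _ (by norm_num : (0:ℝ) < 2)
      push_cast
      linarith
    apply Integrable.mono' hg hmeas.aestronglyMeasurable
    filter_upwards [ae_restrict_mem measurableSet_Ioi] with s hs
    have hs2 : (2:ℝ) < s := hs
    have hs0 : (0:ℝ) < s := by linarith
    have ht : (1:ℝ) < s - 1 := by linarith
    have ht0 : (0:ℝ) < s - 1 := by linarith
    rw [Real.norm_eq_abs, abs_of_nonneg (hnonneg s)]
    simp only [hf, if_pos (show (1:ℝ) < s by linarith), abs_of_pos ht0]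
    -- key: s^κ - (s-1)^κ ≤ κ * (s-1)^(κ-1)
    have hkey : s ^ κ - (s - 1) ^ κ ≤ κ * (s - 1) ^ (κ - 1) := by
      have hb := rpow_one_add_le_one_add_mul_self
        (s := 1 / (s - 1)) (by have := one_div_pos.mpr ht0; linarith) hκ0.le (by linarith : κ ≤ 1)
      have hsplit : s ^ κ = (s - 1) ^ κ * (1 + 1 / (s - 1)) ^ κ := by
        rw [← Real.mul_rpow ht0.le (by positivity)]
        congr 1
        field_simp
        ring
      have h1 : (s - 1) ^ κ * (1 + 1 / (s - 1)) ^ κ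
          ≤ (s - 1) ^ κ * (1 + κ * (1 / (s - 1))) :=
        mul_le_mul_of_nonneg_left hb (Real.rpow_nonneg ht0.le κ)
      have h2 : (s - 1) ^ κ * (1 + κ * (1 / (s - 1)))
          = (s - 1) ^ κ + κ * (s - 1) ^ (κ - 1) := by
        rw [Real.rpow_sub ht0, Real.rpow_one]
        field_simp
      rw [hsplit]
      linarith [h1, h2.le]
    have hmono : (s - 1) ^ κ ≤ s ^ κ := Real.rpow_le_rpow ht0.le (by linarith) hκ0.le
    have hhalf : (s - 1) ^ (κ - 1) ≤ 2 ^ ((1:ℝ) - κ) * s ^ (κ - 1) := by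
      have h1 : (s - 1) ^ (κ - 1) ≤ (s / 2) ^ (κ - 1) :=
        Real.rpow_le_rpow_of_nonpos (by linarith) (by linarith) (by linarith)
      have h2 : (s / 2) ^ (κ - 1) = 2 ^ ((1:ℝ) - κ) * s ^ (κ - 1) := by
        have he : ((1:ℝ) - κ) = -(κ - 1) := by ring
        rw [Real.div_rpow hs0.le (by norm_num), he, Real.rpow_neg (by norm_num),
          div_eq_mul_inv, mul_comm]
      linarith [h1, h2.le]
    have hbound : s ^ κ - (s - 1) ^ κ ≤ κ * 2 ^ ((1:ℝ) - κ) * s ^ (κ - 1) := by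
      calc s ^ κ - (s - 1) ^ κ ≤ κ * (s - 1) ^ (κ - 1) := hkey
        _ ≤ κ * (2 ^ ((1:ℝ) - κ) * s ^ (κ - 1)) :=
            mul_le_mul_of_nonneg_left hhalf hκ0.le
        _ = κ * 2 ^ ((1:ℝ) - κ) * s ^ (κ - 1) := by ring
    have hsq : ((s - 1) ^ κ - s ^ κ) ^ 2 = (s ^ κ - (s - 1) ^ κ) ^ 2 := by ring
    rw [hsq]
    calc (s ^ κ - (s - 1) ^ κ) ^ 2
        ≤ (κ * 2 ^ ((1:ℝ) - κ) * s ^ (κ - 1)) ^ 2 := by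
          apply pow_le_pow_left₀ (by linarith) hbound
      _ = (κ * 2 ^ ((1:ℝ) - κ)) ^ 2 * s ^ ((κ - 1) * (2:ℕ)) := by
          rw [mul_pow, Real.rpow_mul_natCast hs0.le]
  have hunion : IntegrableOn f (Set.Ioi 0) := by
    have : Set.Ioc (0:ℝ) 2 ∪ Set.Ioi 2 = Set.Ioi 0 := Set.Ioc_union_Ioi_eq_Ioi (by norm_num)
    rw [← this]
    exact h1.union h2
  refine ⟨hunion, ?_⟩
  rw [setIntegral_pos_iff_support_of_nonneg_ae
    (Filter.Eventually.of_forall fun s => hnonneg s) hunion]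
  have hsub : Set.Ioo (0:ℝ) 1 ⊆ Function.support f ∩ Set.Ioi 0 := by
    intro s hs
    obtain ⟨hs0, hs1⟩ := hs
    refine ⟨?_, hs0⟩
    simp only [Function.mem_support, hf]
    rw [if_neg (by linarith)]
    have hp : (0:ℝ) < s ^ κ := Real.rpow_pos_of_pos hs0 κ
    have : ((0:ℝ) - s ^ κ) ^ 2 = (s ^ κ) ^ 2 := by ring
    rw [this]
    exact ne_of_gt (pow_pos hp 2)
  calc (0:ENNReal) < 1 := by norm_num
    _ = volume (Set.Ioo (0:ℝ) 1) := by simp [Real.volume_Ioo]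
    _ ≤ volume (Function.support f ∩ Set.Ioi 0) := measure_mono hsub
end

section
/- For κ ∈ (0, 1/2), the integral ∫_{−1}^∞ (|s+1|^κ − |s|^κ · 1_{s>0})² ds is finite and strictly positive. -/
open MeasureTheory

theorem cusp_Rplus_finite_pos (κ : ℝ) (hκ0 : 0 < κ) (hκ : κ < 1/2) :
    IntegrableOn
      (fun s : ℝ => (|s + 1| ^ κ - (if 0 < s then |s| ^ κ else 0)) ^ 2) (Set.Ioi (-1)) ∧
    0 < ∫ s in Set.Ioi (-1:ℝ), (|s + 1| ^ κ - (if 0 < s then |s| ^ κ else 0)) ^ 2 := by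
  set g : ℝ → ℝ := fun s => (|s + 1| ^ κ - (max s 0) ^ κ) ^ 2 with hg
  have hfg : (fun s : ℝ => (|s + 1| ^ κ - (if 0 < s then |s| ^ κ else 0)) ^ 2) = g := by
    funext s
    simp only [hg]
    by_cases hs : 0 < s
    · rw [if_pos hs, max_eq_left hs.le, abs_of_pos hs]
    · rw [if_neg hs, max_eq_right (le_of_not_gt hs), Real.zero_rpow (ne_of_gt hκ0)]
  rw [hfg]
  have hgc : Continuous g := by
    apply Continuous.pow
    apply Continuous.sub
    · exact ((continuous_abs.comp (continuous_id.add continuous_const)).rpow_const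
        (fun x => Or.inr hκ0.le))
    · exact ((continuous_id.max continuous_const).rpow_const (fun x => Or.inr hκ0.le))
  -- integrability on Ioi 1 via bound
  have hbound : ∀ s : ℝ, s ∈ Set.Ioi (1:ℝ) → ‖g s‖ ≤ κ^2 * s ^ (2*(κ-1)) := by
    intro s hs
    have hs1 : (1:ℝ) < s := hs
    have hs0 : (0:ℝ) < s := lt_trans one_pos hs1
    have habs : |s + 1| = s + 1 := abs_of_pos (by linarith)
    have hmax : max s 0 = s := max_eq_left hs0.le
    have key : (s + 1) ^ κ - s ^ κ ≤ κ * s ^ (κ - 1) := by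
      have h1 : s + 1 = s * (1 + 1/s) := by field_simp
      have h2 : (s * (1 + 1/s)) ^ κ = s ^ κ * (1 + 1/s) ^ κ :=
        Real.mul_rpow hs0.le (by positivity)
      have h3 : (1 + 1/s) ^ κ ≤ 1 + κ * (1/s) :=
        rpow_one_add_le_one_add_mul_self (by linarith [(one_div_pos.mpr hs0).le]) hκ0.le (by linarith)
      have h4 : s ^ κ * (1/s) = s ^ (κ - 1) := by
        rw [Real.rpow_sub hs0, Real.rpow_one]; ring
      calc (s + 1) ^ κ - s ^ κ = s ^ κ * (1 + 1/s) ^ κ - s ^ κ := by rw [h1, h2]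
        _ ≤ s ^ κ * (1 + κ * (1/s)) - s ^ κ := by
            have := Real.rpow_nonneg hs0.le κ
            nlinarith
        _ = κ * (s ^ κ * (1/s)) := by ring
        _ = κ * s ^ (κ - 1) := by rw [h4]
    have key0 : 0 ≤ (s + 1) ^ κ - s ^ κ := by
      have : s ^ κ ≤ (s + 1) ^ κ :=
        Real.rpow_le_rpow hs0.le (by linarith) hκ0.le
      linarith
    have hsq : ((s + 1) ^ κ - s ^ κ) ^ 2 ≤ (κ * s ^ (κ - 1)) ^ 2 := by
      apply pow_le_pow_left₀ key0 key
    have hrw : (κ * s ^ (κ - 1)) ^ 2 = κ^2 * s ^ (2*(κ-1)) := by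
      rw [mul_pow, ← Real.rpow_natCast (s ^ (κ-1)) 2, ← Real.rpow_mul hs0.le]
      push_cast
      ring_nf
    have hgs : g s = ((s + 1) ^ κ - s ^ κ) ^ 2 := by rw [hg]; simp [habs, hmax]
    rw [Real.norm_eq_abs, hgs, abs_of_nonneg (sq_nonneg _), ← hrw]
    exact hsq
  have hInt1 : IntegrableOn g (Set.Ioi (1:ℝ)) := by
    have hb : IntegrableOn (fun s : ℝ => κ^2 * s ^ (2*(κ-1))) (Set.Ioi (1:ℝ)) :=
      (integrableOn_Ioi_rpow_of_lt (by linarith) one_pos).const_mul (κ^2)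
    exact Integrable.mono' hb (hgc.aestronglyMeasurable.restrict)
      ((ae_restrict_iff' measurableSet_Ioi).2 (Filter.Eventually.of_forall hbound))
  have hInt0 : IntegrableOn g (Set.Ioc (-1:ℝ) 1) := hgc.integrableOn_Ioc
  have hInt : IntegrableOn g (Set.Ioi (-1:ℝ)) := by
    rw [← Set.Ioc_union_Ioi_eq_Ioi (by norm_num : (-1:ℝ) ≤ 1)]
    exact hInt0.union hInt1
  refine ⟨hInt, ?_⟩
  rw [setIntegral_pos_iff_support_of_nonneg_ae
    (Filter.Eventually.of_forall (fun s => sq_nonneg _)) hInt]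
  have hsub : Set.Ioo (-1:ℝ) 0 ⊆ Function.support g ∩ Set.Ioi (-1) := by
    intro s hs
    constructor
    · have hmax : max s 0 = 0 := max_eq_right hs.2.le
      have : g s = (|s + 1| ^ κ) ^ 2 := by
        rw [hg]; simp [hmax, Real.zero_rpow (ne_of_gt hκ0)]
      have hpos : 0 < |s + 1| ^ κ := by
        apply Real.rpow_pos_of_pos
        rw [abs_pos]; intro h; linarith [hs.1, h]
      simp only [Function.mem_support, this]
      positivity
    · exact hs.1
  calc (0:ENNReal) < volume (Set.Ioo (-1:ℝ) 0) := by
        rw [Real.volume_Ioo]; norm_num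
    _ ≤ volume (Function.support g ∩ Set.Ioi (-1)) := measure_mono hsub
end

section
/- Let κ ∈ (0, 1/2) and let λ : ℝ → ℝ be continuously differentiable and strictly positive. Define S(t) = λ(t) |t/δ|^κ 1_{0 ≤ t ≤ δ} + λ(t) 1_{t > δ} for fixed δ > 0. If τ* > τ₀ and ∫₀^T (S(t − τ*) − S(t − τ₀))² dt = 0 with τ₀ + δ < T, then τ* = τ₀. -/
open MeasureTheory

theorem one_detector_identifiability (κ δ T τ₀ τ' : ℝ) (hκ0 : 0 < κ) (hκ : κ < 1/2)
    (hδ : 0 < δ) (hτ0 : 0 ≤ τ₀) (hτ : τ₀ < τ') (hT : τ₀ + δ < T)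
    (lam : ℝ → ℝ) (hlam : ContDiff ℝ 1 lam) (hpos : ∀ t, 0 < lam t)
    (S : ℝ → ℝ)
    (hS : S = fun t => if 0 ≤ t ∧ t ≤ δ then lam t * |t / δ| ^ κ
                       else if δ < t then lam t else 0)
    (hint : (∫ t in (0:ℝ)..T, (S (t - τ') - S (t - τ₀)) ^ 2) = 0) :
    τ' = τ₀ := by
  -- bounds on S
  have hS_nonneg : ∀ x, 0 ≤ S x := by
    intro x
    rw [hS]
    dsimp only
    split_ifs with h1 h2
    · exact mul_nonneg (hpos x).le (Real.rpow_nonneg (abs_nonneg _) κ)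
    · exact (hpos x).le
    · exact le_refl 0
  have hS_le : ∀ x, S x ≤ lam x := by
    intro x
    rw [hS]
    dsimp only
    split_ifs with h1 h2
    · calc lam x * |x / δ| ^ κ ≤ lam x * 1 := by
            apply mul_le_mul_of_nonneg_left _ (hpos x).le
            apply Real.rpow_le_one (abs_nonneg _) _ hκ0.le
            rw [abs_div, abs_of_pos hδ, div_le_one hδ]
            calc |x| = x := abs_of_nonneg h1.1
              _ ≤ δ := h1.2
          _ = lam x := mul_one _
    · exact le_refl _
    · exact (hpos x).le
  -- measurability
  have hS_meas : Measurable S := by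
    rw [hS]
    apply Measurable.ite
    · have : {t : ℝ | 0 ≤ t ∧ t ≤ δ} = Set.Icc 0 δ := by ext x; simp [Set.mem_Icc]
      rw [this]; exact measurableSet_Icc
    · exact (hlam.continuous.measurable).mul
        ((measurable_id.div_const δ).abs.pow_const κ)
    · apply Measurable.ite
      · have : {t : ℝ | δ < t} = Set.Ioi δ := rfl
        rw [this]; exact measurableSet_Ioi
      · exact hlam.continuous.measurable
      · exact measurable_const
  set f : ℝ → ℝ := fun t => (S (t - τ') - S (t - τ₀)) ^ 2 with hfdef
  have hf_meas : Measurable f := by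
    apply Measurable.pow_const
    exact ((hS_meas.comp (measurable_id.sub_const τ')).sub
      (hS_meas.comp (measurable_id.sub_const τ₀)))
  have hf_nonneg : ∀ t, 0 ≤ f t := fun t => sq_nonneg _
  set g : ℝ → ℝ := fun t => (lam (t - τ') + lam (t - τ₀)) ^ 2 with hgdef
  have hg_cont : Continuous g := by
    apply Continuous.pow
    exact (hlam.continuous.comp (continuous_id.sub continuous_const)).add
      (hlam.continuous.comp (continuous_id.sub continuous_const))
  have hfg : ∀ t, |f t| ≤ |g t| := by
    intro t
    rw [abs_of_nonneg (hf_nonneg t), abs_of_nonneg (sq_nonneg _)]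
    have h1 : |S (t - τ') - S (t - τ₀)| ≤ lam (t - τ') + lam (t - τ₀) := by
      apply (abs_sub _ _).trans
      rw [abs_of_nonneg (hS_nonneg _), abs_of_nonneg (hS_nonneg _)]
      exact add_le_add (hS_le _) (hS_le _)
    calc f t = |S (t - τ') - S (t - τ₀)| ^ 2 := (sq_abs _).symm
      _ ≤ (lam (t - τ') + lam (t - τ₀)) ^ 2 := by
          apply pow_le_pow_left₀ (abs_nonneg _) h1
  have hf_int : ∀ a b : ℝ, IntervalIntegrable f volume a b := by
    intro a b
    apply IntervalIntegrable.mono_fun (hg_cont.intervalIntegrable a b)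
      hf_meas.aestronglyMeasurable
    exact Filter.Eventually.of_forall hfg
  -- positivity on (τ₀, min τ' (τ₀ + δ))
  set b : ℝ := min τ' (τ₀ + δ) with hbdef
  have hτ₀b : τ₀ < b := lt_min hτ (by linarith)
  have hf_pos : ∀ t ∈ Set.Ioo τ₀ b, 0 < f t := by
    intro t ht
    have ht1 : τ₀ < t := ht.1
    have ht2 : t < τ' := lt_of_lt_of_le ht.2 (min_le_left _ _)
    have ht3 : t < τ₀ + δ := lt_of_lt_of_le ht.2 (min_le_right _ _)
    have hS1 : S (t - τ') = 0 := by
      rw [hS]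
      dsimp only
      rw [if_neg, if_neg]
      · linarith
      · rintro ⟨h, _⟩; linarith
    have hS2 : 0 < S (t - τ₀) := by
      rw [hS]
      dsimp only
      rw [if_pos ⟨by linarith, by linarith⟩]
      apply mul_pos (hpos _)
      apply Real.rpow_pos_of_pos
      rw [abs_pos]
      intro h
      have := div_eq_zero_iff.mp h
      rcases this with h' | h'
      · linarith
      · linarith
    show 0 < f t
    rw [hfdef]
    dsimp only
    rw [hS1, zero_sub, neg_sq]
    positivity
  have hlb : 0 < ∫ t in τ₀..b, f t :=
    intervalIntegral.intervalIntegral_pos_of_pos_on (hf_int τ₀ b) hf_pos hτ₀b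
  have hmono : (∫ t in τ₀..b, f t) ≤ ∫ t in (0:ℝ)..T, f t := by
    exact intervalIntegral.integral_mono_interval hτ0 hτ₀b.le
      (le_trans (min_le_right _ _) hT.le)
      (Filter.Eventually.of_forall hf_nonneg)
      (hf_int 0 T)
  rw [hint] at hmono
  linarith
end
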